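/- Let ℓ : ℝ^{d×d'} → ℝ be differentiable, N ≥ 2 an integer, and let W, U, σ, V be a differentiable SVD path on an open interval I. Let t₀ ∈ I be such that: σ_r(t₀) ≠ 0 for every r; the product matrix obeys the deep-factorization dynamics at t₀, i.e. W′(t₀) = −T_N(U(t₀), σ(t₀), V(t₀), ∇ℓ(W(t₀))); and the singular vectors are stationary at t₀, i.e. U′(t₀) = 0 and V′(t₀) = 0. Then the k×k matrix U(t₀)ᵀ·∇ℓ(W(t₀))·V(t₀) is diagonal; that is, the singular vectors of the product matrix align with singular vectors of the gradient. -/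

import Mathlib

open Matrix

/-- `dpow σ β` is the `k×k` diagonal matrix with `r`-th diagonal entry `(σᵣ²)^β`
(real power, with the convention `x⁰ = 1`). -/
noncomputable def dpow {k : ℕ} (σ : Fin k → ℝ) (β : ℝ) : Matrix (Fin k) (Fin k) ℝ :=
  Matrix.diagonal (fun r => (σ r ^ 2) ^ β)

/-- `TN N U σ V M` is the right-hand side of the gradient-flow dynamics of the product
matrix of a depth-`N` matrix factorization with balanced initialization, expressed
through a singular value decomposition `W = U·diag(σ)·Vᵀ`. -/
noncomputable def TN {d d' k : ℕ} (N : ℕ) (U : Matrix (Fin d) (Fin k) ℝ)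
    (σ : Fin k → ℝ) (V : Matrix (Fin d') (Fin k) ℝ) (M : Matrix (Fin d) (Fin d') ℝ) :
    Matrix (Fin d) (Fin d') ℝ :=
  M * V * dpow σ (((N : ℝ) - 1) / N) * Vᵀ +
  (∑ j ∈ Finset.Icc 2 (N - 1),
    U * dpow σ (((j : ℝ) - 1) / N) * Uᵀ * M * V * dpow σ (((N : ℝ) - (j : ℝ)) / N) * Vᵀ) +
  U * dpow σ (((N : ℝ) - 1) / N) * Uᵀ * M

/-- Stationarity of singular vectors implies alignment with the gradient: along a
differentiable SVD path obeying the deep-factorization dynamics at `t₀`, with all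
singular values nonzero at `t₀`, if `U′(t₀) = 0` and `V′(t₀) = 0` then
`U(t₀)ᵀ·∇ℓ(W(t₀))·V(t₀)` is diagonal. -/
theorem stmt14 {d d' : ℕ} (N : ℕ) (hN : 2 ≤ N)
    (ℓ : Matrix (Fin d) (Fin d') ℝ → ℝ)
    (gradℓ : Matrix (Fin d) (Fin d') ℝ → Matrix (Fin d) (Fin d') ℝ)
    (hgrad : ∀ Wm H, HasDerivAt (fun s : ℝ => ℓ (Wm + s • H))
      (((gradℓ Wm)ᵀ * H).trace) 0)
    (I : Set ℝ) (hI_open : IsOpen I) (hI_conn : I.OrdConnected)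
    (W W' : ℝ → Matrix (Fin d) (Fin d') ℝ)
    (U U' : ℝ → Matrix (Fin d) (Fin (min d d')) ℝ)
    (σ σ' : ℝ → Fin (min d d') → ℝ)
    (V V' : ℝ → Matrix (Fin d') (Fin (min d d')) ℝ)
    (hW : ∀ t ∈ I, ∀ p q, HasDerivAt (fun s => W s p q) (W' t p q) t)
    (hU : ∀ t ∈ I, ∀ p q, HasDerivAt (fun s => U s p q) (U' t p q) t)
    (hσ : ∀ t ∈ I, ∀ r, HasDerivAt (fun s => σ s r) (σ' t r) t)
    (hV : ∀ t ∈ I, ∀ p q, HasDerivAt (fun s => V s p q) (V' t p q) t)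
    (hSVD : ∀ t ∈ I, W t = U t * Matrix.diagonal (σ t) * (V t)ᵀ)
    (hUorth : ∀ t ∈ I, (U t)ᵀ * U t = 1)
    (hVorth : ∀ t ∈ I, (V t)ᵀ * V t = 1)
    (t₀ : ℝ) (ht₀ : t₀ ∈ I)
    (hσ_ne : ∀ r, σ t₀ r ≠ 0)
    (hdyn : W' t₀ = -TN N (U t₀) (σ t₀) (V t₀) (gradℓ (W t₀)))
    (hU_stat : U' t₀ = 0) (hV_stat : V' t₀ = 0) :
    ∀ r r', r ≠ r' → ((U t₀)ᵀ * gradℓ (W t₀) * V t₀) r r' = 0 := by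
  -- Step 1: W' t₀ = U t₀ * diagonal (σ' t₀) * (V t₀)ᵀ
  have hW'eq : W' t₀ = U t₀ * Matrix.diagonal (σ' t₀) * (V t₀)ᵀ := by
    ext p q
    have h1 : HasDerivAt (fun s => ∑ x, U s p x * σ s x * V s q x)
        (∑ x, (U' t₀ p x * σ t₀ x * V t₀ q x + U t₀ p x * σ' t₀ x * V t₀ q x
          + U t₀ p x * σ t₀ x * V' t₀ q x)) t₀ := by
      apply HasDerivAt.fun_sum
      intro x _
      have h := ((hU t₀ ht₀ p x).fun_mul (hσ t₀ ht₀ x)).fun_mul (hV t₀ ht₀ q x)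
      refine h.congr_deriv ?_
      ring
    have heq : (fun s => W s p q) =ᶠ[nhds t₀] (fun s => ∑ x, U s p x * σ s x * V s q x) := by
      filter_upwards [hI_open.mem_nhds ht₀] with s hs
      rw [hSVD s hs, Matrix.mul_apply]
      simp [Matrix.mul_diagonal, Matrix.transpose_apply]
    have h2 : HasDerivAt (fun s => W s p q)
        (∑ x, (U' t₀ p x * σ t₀ x * V t₀ q x + U t₀ p x * σ' t₀ x * V t₀ q x
          + U t₀ p x * σ t₀ x * V' t₀ q x)) t₀ := h1.congr_of_eventuallyEq heq
    have h3 := (hW t₀ ht₀ p q).unique h2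
    rw [h3, Matrix.mul_apply]
    simp [hU_stat, hV_stat, Matrix.mul_diagonal, Matrix.transpose_apply]
  intro r r' hrr
  set M := gradℓ (W t₀) with hM
  set G := (U t₀)ᵀ * M * V t₀ with hG
  -- Step 2: Uᵀ W' V = diagonal (σ' t₀)
  have hleft : (U t₀)ᵀ * W' t₀ * V t₀ = Matrix.diagonal (σ' t₀) := by
    rw [hW'eq]
    calc (U t₀)ᵀ * (U t₀ * Matrix.diagonal (σ' t₀) * (V t₀)ᵀ) * V t₀
        = ((U t₀)ᵀ * U t₀) * Matrix.diagonal (σ' t₀) * ((V t₀)ᵀ * V t₀) := by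
          simp only [Matrix.mul_assoc]
      _ = Matrix.diagonal (σ' t₀) := by
          rw [hUorth t₀ ht₀, hVorth t₀ ht₀, Matrix.one_mul, Matrix.mul_one]
  -- Step 3: Uᵀ TN V in terms of G
  have hTN : (U t₀)ᵀ * TN N (U t₀) (σ t₀) (V t₀) M * V t₀ =
      G * dpow (σ t₀) (((N : ℝ) - 1) / N) +
      (∑ j ∈ Finset.Icc 2 (N - 1),
        dpow (σ t₀) (((j : ℝ) - 1) / N) * G * dpow (σ t₀) (((N : ℝ) - (j : ℝ)) / N)) +
      dpow (σ t₀) (((N : ℝ) - 1) / N) * G := by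
    have e1 : (U t₀)ᵀ * (M * V t₀ * dpow (σ t₀) (((N : ℝ) - 1) / N) * (V t₀)ᵀ) * V t₀
        = G * dpow (σ t₀) (((N : ℝ) - 1) / N) := by
      calc (U t₀)ᵀ * (M * V t₀ * dpow (σ t₀) (((N : ℝ) - 1) / N) * (V t₀)ᵀ) * V t₀
          = (U t₀)ᵀ * M * V t₀ * dpow (σ t₀) (((N : ℝ) - 1) / N) * ((V t₀)ᵀ * V t₀) := by
            simp only [Matrix.mul_assoc]
        _ = G * dpow (σ t₀) (((N : ℝ) - 1) / N) := by
            rw [hVorth t₀ ht₀, Matrix.mul_one, hG]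
    have e2 : (∑ j ∈ Finset.Icc 2 (N - 1), (U t₀)ᵀ *
          (U t₀ * dpow (σ t₀) (((j : ℝ) - 1) / N) * (U t₀)ᵀ * M * V t₀ *
            dpow (σ t₀) (((N : ℝ) - (j : ℝ)) / N) * (V t₀)ᵀ) * V t₀)
        = ∑ j ∈ Finset.Icc 2 (N - 1),
            dpow (σ t₀) (((j : ℝ) - 1) / N) * G * dpow (σ t₀) (((N : ℝ) - (j : ℝ)) / N) := by
      apply Finset.sum_congr rfl
      intro j _
      calc (U t₀)ᵀ * (U t₀ * dpow (σ t₀) (((j : ℝ) - 1) / N) * (U t₀)ᵀ * M * V t₀ *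
              dpow (σ t₀) (((N : ℝ) - (j : ℝ)) / N) * (V t₀)ᵀ) * V t₀
          = ((U t₀)ᵀ * U t₀) * (dpow (σ t₀) (((j : ℝ) - 1) / N) * ((U t₀)ᵀ * (M * (V t₀ *
              dpow (σ t₀) (((N : ℝ) - (j : ℝ)) / N) * ((V t₀)ᵀ * V t₀))))) := by
            simp only [Matrix.mul_assoc]
        _ = dpow (σ t₀) (((j : ℝ) - 1) / N) * G * dpow (σ t₀) (((N : ℝ) - (j : ℝ)) / N) := by
            rw [hUorth t₀ ht₀, hVorth t₀ ht₀, Matrix.one_mul, Matrix.mul_one, hG]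
            simp only [Matrix.mul_assoc]
    have e3 : (U t₀)ᵀ * (U t₀ * dpow (σ t₀) (((N : ℝ) - 1) / N) * (U t₀)ᵀ * M) * V t₀
        = dpow (σ t₀) (((N : ℝ) - 1) / N) * G := by
      calc (U t₀)ᵀ * (U t₀ * dpow (σ t₀) (((N : ℝ) - 1) / N) * (U t₀)ᵀ * M) * V t₀
          = ((U t₀)ᵀ * U t₀) * (dpow (σ t₀) (((N : ℝ) - 1) / N) * ((U t₀)ᵀ * (M * V t₀))) := by
            simp only [Matrix.mul_assoc]
        _ = dpow (σ t₀) (((N : ℝ) - 1) / N) * G := by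
            rw [hUorth t₀ ht₀, Matrix.one_mul, hG]
            simp only [Matrix.mul_assoc]
    rw [TN, Matrix.mul_add, Matrix.mul_add, Matrix.add_mul, Matrix.add_mul,
      Matrix.mul_sum, Matrix.sum_mul, e1, e2, e3]
  -- Step 4: combine, take entry (r,r')
  have hcomb : Matrix.diagonal (σ' t₀) =
      -((U t₀)ᵀ * TN N (U t₀) (σ t₀) (V t₀) M * V t₀) := by
    rw [← hleft, hdyn]
    simp [Matrix.neg_mul, Matrix.mul_neg]
  rw [hTN] at hcomb
  have hentry := congrFun (congrFun hcomb r) r'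
  have hde : Matrix.diagonal (σ' t₀) r r' = 0 := by
    simp [Matrix.diagonal_apply_ne _ hrr]
  rw [hde] at hentry
  set c := (σ t₀ r' ^ 2) ^ (((N : ℝ) - 1) / N) +
      (∑ j ∈ Finset.Icc 2 (N - 1),
        (σ t₀ r ^ 2) ^ (((j : ℝ) - 1) / N) * (σ t₀ r' ^ 2) ^ (((N : ℝ) - (j : ℝ)) / N)) +
      (σ t₀ r ^ 2) ^ (((N : ℝ) - 1) / N) with hc
  have hval : (G * dpow (σ t₀) (((N : ℝ) - 1) / N) +
      (∑ j ∈ Finset.Icc 2 (N - 1),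
        dpow (σ t₀) (((j : ℝ) - 1) / N) * G * dpow (σ t₀) (((N : ℝ) - (j : ℝ)) / N)) +
      dpow (σ t₀) (((N : ℝ) - 1) / N) * G) r r' = G r r' * c := by
    simp only [Matrix.add_apply, Matrix.sum_apply, dpow, Matrix.mul_diagonal,
      Matrix.diagonal_mul, hc]
    rw [mul_add, mul_add, Finset.mul_sum]
    congr 1
    congr 1
    · exact Finset.sum_congr rfl (fun j _ => by ring)
    · ring
  rw [Matrix.neg_apply, hval] at hentry
  have hcpos : 0 < c := by
    rw [hc]
    have h1 : (0:ℝ) < (σ t₀ r' ^ 2) ^ (((N : ℝ) - 1) / N) :=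
      Real.rpow_pos_of_pos (by have := hσ_ne r'; positivity) _
    have h2 : (0:ℝ) ≤ ∑ j ∈ Finset.Icc 2 (N - 1),
        (σ t₀ r ^ 2) ^ (((j : ℝ) - 1) / N) * (σ t₀ r' ^ 2) ^ (((N : ℝ) - (j : ℝ)) / N) := by
      apply Finset.sum_nonneg
      intro j _
      have := hσ_ne r
      have := hσ_ne r'
      positivity
    have h3 : (0:ℝ) < (σ t₀ r ^ 2) ^ (((N : ℝ) - 1) / N) :=
      Real.rpow_pos_of_pos (by have := hσ_ne r; positivity) _
    linarith
  have hz : G r r' * c = 0 := by linarith [hentry]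
  exact (mul_eq_zero.mp hz).resolve_right (ne_of_gt hcpos)
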